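/- Let F have L₂-Lipschitz Hessian, and suppose x, h, g, H, λ satisfy ‖g - ∇F(x)‖ ≤ ε/6, ‖H - ∇²F(x)‖ ≤ √(εL₂)/3, ‖h‖ ≤ √(ε/L₂), g + Hh + (λL₂/2)h = 0, H + (λL₂/2)I ⪰ 0, and λ ≤ 2√(ε/L₂). Then ‖∇F(x + h)‖ ≤ 3ε. -/

import Mathlib

open Real RealInnerProductSpace

theorem stmt_7 {d : ℕ} (F : EuclideanSpace ℝ (Fin d) → ℝ) (ε L₂ : ℝ)
    (hε : 0 < ε) (hL₂ : 0 < L₂) (hF : ContDiff ℝ 2 F)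
    (hLip : ∀ x y : EuclideanSpace ℝ (Fin d),
      ‖fderiv ℝ (gradient F) x - fderiv ℝ (gradient F) y‖ ≤ L₂ * ‖x - y‖)
    (x g h : EuclideanSpace ℝ (Fin d))
    (H : EuclideanSpace ℝ (Fin d) →L[ℝ] EuclideanSpace ℝ (Fin d))
    (hg : ‖g - gradient F x‖ ≤ ε / 6)
    (hH : ‖H - fderiv ℝ (gradient F) x‖ ≤ Real.sqrt (ε * L₂) / 3)
    (hh : ‖h‖ ≤ Real.sqrt (ε / L₂))
    (lam : ℝ) (hlam : 0 ≤ lam)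
    (hfo : g + H h + (lam * L₂ / 2) • h = 0)
    (hpsd : ∀ v, 0 ≤ ⟪H v, v⟫ + (lam * L₂ / 2) * ‖v‖ ^ 2)
    (hlam2 : lam ≤ 2 * Real.sqrt (ε / L₂)) :
    ‖gradient F (x + h)‖ ≤ 3 * ε := by
  set φ := fderiv ℝ (gradient F) x with hφ
  -- gradient F is C¹
  have hgrad : ContDiff ℝ 1 (gradient F) := by
    have h1 : ContDiff ℝ 1 (fderiv ℝ F) := hF.fderiv_right (by norm_num)
    have : gradient F = fun y =>
        (InnerProductSpace.toDual ℝ (EuclideanSpace ℝ (Fin d))).symm (fderiv ℝ F y) := rfl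
    rw [this]
    exact (InnerProductSpace.toDual ℝ _).symm.contDiff.comp h1
  have hdiff : Differentiable ℝ (gradient F) := hgrad.differentiable one_ne_zero
  -- mean value bound
  have key : ‖gradient F (x + h) - gradient F x - φ h‖ ≤ (L₂ * ‖h‖) * ‖h‖ := by
    have := Convex.norm_image_sub_le_of_norm_fderiv_le'
      (f := gradient F) (φ := φ) (C := L₂ * ‖h‖) (s := Metric.closedBall x ‖h‖)
      (fun y _ => hdiff y)
      (fun y hy => by
        have hyx : ‖y - x‖ ≤ ‖h‖ := by simpa [dist_eq_norm] using hy
        calc ‖fderiv ℝ (gradient F) y - φ‖ ≤ L₂ * ‖y - x‖ := hLip y x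
          _ ≤ L₂ * ‖h‖ := by nlinarith)
      (convex_closedBall x ‖h‖)
      (Metric.mem_closedBall_self (norm_nonneg h))
      (y := x + h) (by simp [dist_eq_norm])
    simpa using this
  -- algebraic decomposition
  have hdecomp : gradient F (x + h) =
      (gradient F (x + h) - gradient F x - φ h) + (gradient F x - g) + ((φ - H) h)
      + (-((lam * L₂ / 2) • h)) := by
    have hGH : g + H h = -((lam * L₂ / 2) • h) := by
      rw [add_eq_zero_iff_eq_neg] at hfo
      exact hfo
    simp only [ContinuousLinearMap.sub_apply]
    have : (gradient F (x + h) - gradient F x - φ h) + (gradient F x - g) + (φ h - H h)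
        + (-((lam * L₂ / 2) • h))
        = gradient F (x + h) - (g + H h) + (-((lam * L₂ / 2) • h)) := by abel
    rw [this, hGH]
    abel
  -- sqrt facts
  set s := Real.sqrt (ε / L₂) with hsdef
  clear_value s
  have hs2 : s ^ 2 = ε / L₂ := by rw [hsdef]; exact Real.sq_sqrt (by positivity)
  have hst : Real.sqrt (ε * L₂) * s = ε := by
    rw [hsdef, ← Real.sqrt_mul (by positivity)]
    rw [show ε * L₂ * (ε / L₂) = ε ^ 2 by field_simp]
    exact Real.sqrt_sq hε.le
  have hsnn : 0 ≤ s := by rw [hsdef]; exact Real.sqrt_nonneg _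
  have htnn : 0 ≤ Real.sqrt (ε * L₂) := Real.sqrt_nonneg _
  have hhn : 0 ≤ ‖h‖ := norm_nonneg _
  have hss : L₂ * (s * s) = ε := by
    have h' : s * s = ε / L₂ := by rw [← hs2]; ring
    rw [h']; field_simp
  have e1 : ‖gradient F x - g‖ ≤ ε / 6 := by rw [norm_sub_rev]; exact hg
  have e2 : ‖(φ - H) h‖ ≤ (Real.sqrt (ε * L₂) / 3) * ‖h‖ := by
    calc ‖(φ - H) h‖ ≤ ‖φ - H‖ * ‖h‖ := (φ - H).le_opNorm h
      _ ≤ (Real.sqrt (ε * L₂) / 3) * ‖h‖ := by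
          gcongr
          rw [norm_sub_rev]
          exact hH
  have e3 : ‖-((lam * L₂ / 2) • h)‖ = (lam * L₂ / 2) * ‖h‖ := by
    rw [norm_neg, norm_smul, Real.norm_eq_abs, abs_of_nonneg (by positivity)]
  have b1 : (L₂ * ‖h‖) * ‖h‖ ≤ ε := by
    nlinarith [mul_le_mul hh hh hhn hsnn]
  have b2 : (Real.sqrt (ε * L₂) / 3) * ‖h‖ ≤ ε / 3 := by
    nlinarith [mul_le_mul_of_nonneg_left hh htnn]
  have b3 : (lam * L₂ / 2) * ‖h‖ ≤ ε := by
    have hl : lam * ‖h‖ ≤ 2 * (s * s) := by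
      have h2 := mul_le_mul hlam2 hh hhn (by positivity : (0:ℝ) ≤ 2 * s)
      linarith [h2, show (2 * s) * s = 2 * (s * s) by ring]
    calc (lam * L₂ / 2) * ‖h‖ = (L₂ / 2) * (lam * ‖h‖) := by ring
      _ ≤ (L₂ / 2) * (2 * (s * s)) := by
          exact mul_le_mul_of_nonneg_left hl (by positivity)
      _ = L₂ * (s * s) := by ring
      _ = ε := hss
  calc ‖gradient F (x + h)‖
      ≤ ‖gradient F (x + h) - gradient F x - φ h‖ + ‖gradient F x - g‖ + ‖(φ - H) h‖
        + ‖-((lam * L₂ / 2) • h)‖ := by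
        conv_lhs => rw [hdecomp]
        exact le_trans (norm_add_le _ _) (add_le_add (le_trans (norm_add_le _ _)
          (add_le_add (norm_add_le _ _) le_rfl)) le_rfl)
    _ ≤ (L₂ * ‖h‖) * ‖h‖ + ε / 6 + (Real.sqrt (ε * L₂) / 3) * ‖h‖ + (lam * L₂ / 2) * ‖h‖ := by
        rw [e3]
        exact add_le_add (add_le_add (add_le_add key e1) e2) le_rfl
    _ ≤ 3 * ε := by linarith
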